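/- For every positive integer k, exactly half of all binary strings of length 3k-1 are k-omni; that is, P(3k-1, k, 2) = 1/2. -/

import Mathlib

open Finset
open scoped Classical


def blocks : List (Fin 2) → ℕ
  | [] => 0
  | [_] => 0
  | a :: b :: L => if a = b then blocks (b :: L) else blocks L + 1

lemma fin2_cases (a b c : Fin 2) (h : a ≠ b) : c = a ∨ c = b := by revert a b c; decide

lemma fin2_flip (a b : Fin 2) (h : ¬ b = a) : b = a + 1 := by revert a b; decide

lemma fin2_succ_ne (a : Fin 2) : a + 1 ≠ a := by revert a; decide

lemma sublist_cons_of_ne {α : Type*} {x y : α} {T L : List α}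
    (h : (x :: T).Sublist (y :: L)) (hne : x ≠ y) : (x :: T).Sublist L := by
  cases h with
  | cons _ h => exact h
  | cons_cons => exact absurd rfl hne

lemma tail_sublist_of_cons {α : Type*} {x y : α} {T L : List α}
    (h : (x :: T).Sublist (y :: L)) : T.Sublist L := by
  cases h with
  | cons _ h => exact (List.sublist_cons_self x T).trans h
  | cons_cons _ h => exact h

lemma blocks_omni : ∀ (L : List (Fin 2)) (k : ℕ), k ≤ blocks L →
    ∀ T : List (Fin 2), T.length = k → T.Sublist L := by
  intro L
  induction L using blocks.induct with
  | case1 =>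
    intro k hk T hT
    simp [blocks] at hk
    subst hk; simp at hT; simp [hT]
  | case2 a =>
    intro k hk T hT
    simp [blocks] at hk
    subst hk; simp at hT; simp [hT]
  | case3 b L ih =>
    intro k hk T hT
    rw [blocks, if_pos rfl] at hk
    exact ((ih k hk T hT).cons b)
  | case4 a b L hab ih =>
    intro k hk T hT
    rw [blocks, if_neg hab] at hk
    match k, T, hT with
    | 0, [], _ => simp
    | k+1, t :: T', hT =>
      have hT' : T'.length = k := by simpa using hT
      have hsub : T'.Sublist L := ih k (by omega) T' hT'
      rcases fin2_cases a b t hab with rfl | rfl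
      · exact (hsub.cons b).cons₂ t
      · exact ((hsub.cons₂ t).cons a)

lemma omni_blocks : ∀ (L : List (Fin 2)) (k : ℕ), blocks L < k →
    ∃ T : List (Fin 2), T.length = k ∧ ¬ T.Sublist L ∧
      (∀ a, L.head? = some a → T.head? = some (a + 1)) := by
  intro L
  induction L using blocks.induct with
  | case1 =>
    intro k hk
    refine ⟨List.replicate k 0, by simp, ?_, by simp⟩
    intro h
    have := h.length_le
    simp at this
    omega
  | case2 a =>
    intro k hk
    have hk0 : 0 < k := by simpa [blocks] using hk
    obtain ⟨k', rfl⟩ : ∃ k', k = k' + 1 := ⟨k - 1, by omega⟩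
    refine ⟨List.replicate (k' + 1) (a + 1), by simp, ?_, ?_⟩
    · intro h
      have : (a + 1) ∈ [a] := h.subset (List.mem_replicate.2 ⟨by omega, rfl⟩)
      have h2 : a + 1 = a := by simpa using this
      exact fin2_succ_ne a h2
    · intro c hc
      rw [List.head?_cons] at hc
      injection hc with hc
      subst hc
      simp [List.replicate_succ]
  | case3 b L ih =>
    intro k hk
    rw [blocks, if_pos rfl] at hk
    obtain ⟨T, hlen, hns, hhead⟩ := ih k hk
    refine ⟨T, hlen, ?_, ?_⟩
    · intro h
      cases h with
      | cons _ h' => exact hns h'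
      | cons_cons _ h' =>
        have h2 := hhead b rfl
        rw [List.head?_cons] at h2
        injection h2 with h2
        exact fin2_succ_ne b h2.symm
    · intro c hc
      rw [List.head?_cons] at hc
      injection hc with hc
      rw [← hc]
      exact hhead b rfl
  | case4 a b L hab ih =>
    intro k hk
    rw [blocks, if_neg hab] at hk
    obtain ⟨k', rfl⟩ : ∃ k', k = k' + 1 := ⟨k - 1, by omega⟩
    obtain ⟨T', hlen, hns, -⟩ := ih k' (by omega)
    refine ⟨(a + 1) :: T', by simp [hlen], ?_, ?_⟩
    · intro h
      have h2 := sublist_cons_of_ne h (fin2_succ_ne a)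
      exact hns (tail_sublist_of_cons h2)
    · intro c hc
      rw [List.head?_cons] at hc
      injection hc with hc
      subst hc
      rfl

/-- characterization -/
lemma omni_iff_blocks (L : List (Fin 2)) (k : ℕ) :
    (∀ T : List (Fin 2), T.length = k → T.Sublist L) ↔ k ≤ blocks L := by
  constructor
  · intro h
    by_contra hlt
    push_neg at hlt
    obtain ⟨T, hlen, hns, -⟩ := omni_blocks L k hlt
    exact hns (h T hlen)
  · intro h T hT
    exact blocks_omni L k h T hT






lemma ofFn_two (n : ℕ) (S : Fin (n+2) → Fin 2) :
    List.ofFn S = S 0 :: S 1 :: List.ofFn (fun i : Fin n => S i.succ.succ) := by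
  rw [List.ofFn_succ, List.ofFn_succ]
  simp [Fin.succ_zero_eq_one]

lemma blocks_cons_cons_eq (a : Fin 2) (L : List (Fin 2)) :
    blocks (a :: a :: L) = blocks (a :: L) := by
  rw [blocks, if_pos rfl]

lemma blocks_cons_cons_ne (a b : Fin 2) (h : a ≠ b) (L : List (Fin 2)) :
    blocks (a :: b :: L) = blocks L + 1 := by
  rw [blocks, if_neg h]

lemma card_step (n k : ℕ) :
    (univ.filter (fun S : Fin (n+2) → Fin 2 => k + 1 ≤ blocks (List.ofFn S))).card
      = (univ.filter (fun S : Fin (n+1) → Fin 2 => k + 1 ≤ blocks (List.ofFn S))).card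
        + 2 * (univ.filter (fun S : Fin n → Fin 2 => k ≤ blocks (List.ofFn S))).card := by
  classical
  rw [← Finset.card_filter_add_card_filter_not
    (s := univ.filter (fun S : Fin (n+2) → Fin 2 => k + 1 ≤ blocks (List.ofFn S)))
    (p := fun S => S 1 = S 0)]
  congr 1
  · -- equal-first-two case
    rw [Finset.filter_filter]
    apply Finset.card_bij' (i := fun (S : Fin (n+2) → Fin 2) _ => (fun j : Fin (n+1) => S j.succ))
      (j := fun (T : Fin (n+1) → Fin 2) _ => Fin.cons (T 0) T)
    · intro S hS
      simp only [mem_filter, mem_univ, true_and] at hS ⊢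
      obtain ⟨hb, he⟩ := hS
      rw [ofFn_two] at hb
      rw [he, blocks_cons_cons_eq] at hb
      rw [List.ofFn_succ]
      simpa [Fin.succ_zero_eq_one, he] using hb
    · intro T hT
      simp only [mem_filter, mem_univ, true_and] at hT ⊢
      constructor
      · rw [ofFn_two]
        simp only [Fin.cons_zero]
        rw [show ((1 : Fin (n+2))) = (0 : Fin (n+1)).succ from (Fin.succ_zero_eq_one).symm]
        rw [Fin.cons_succ]
        have : (fun i : Fin n => (Fin.cons (T 0) T : Fin (n+2) → Fin 2) i.succ.succ)
            = fun i : Fin n => T i.succ := by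
          funext i; rw [Fin.cons_succ]
        rw [this, blocks_cons_cons_eq, ← List.ofFn_succ]
        exact hT
      · rw [show ((1 : Fin (n+2))) = (0 : Fin (n+1)).succ from (Fin.succ_zero_eq_one).symm]
        simp [Fin.cons_succ, Fin.cons_zero]
    · intro S hS
      simp only [mem_filter, mem_univ, true_and] at hS
      funext j
      refine Fin.cases ?_ ?_ j
      · rw [Fin.cons_zero]; exact hS.2
      · intro i; rw [Fin.cons_succ]
    · intro T hT
      funext j
      rw [Fin.cons_succ]
  · -- different-first-two case
    rw [Finset.filter_filter]
    rw [show (2 : ℕ) * (univ.filter (fun S : Fin n → Fin 2 => k ≤ blocks (List.ofFn S))).card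
        = ((univ : Finset (Fin 2)) ×ˢ (univ.filter (fun S : Fin n → Fin 2 => k ≤ blocks (List.ofFn S)))).card
        from by rw [Finset.card_product]; simp]
    apply Finset.card_bij' (i := fun (S : Fin (n+2) → Fin 2) _ => (S 0, fun i : Fin n => S i.succ.succ))
      (j := fun (p : Fin 2 × (Fin n → Fin 2)) _ => Fin.cons p.1 (Fin.cons (p.1 + 1) p.2))
    · intro S hS
      simp only [mem_filter, mem_univ, true_and, Finset.mem_product] at hS ⊢
      obtain ⟨hb, hne⟩ := hS
      rw [ofFn_two] at hb
      have h10 : S 1 = S 0 + 1 := fin2_flip (S 0) (S 1) hne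
      rw [h10, blocks_cons_cons_ne _ _ (Ne.symm (fin2_succ_ne (S 0)))] at hb
      omega
    · intro p hp
      simp only [mem_filter, mem_univ, true_and, Finset.mem_product] at hp ⊢
      constructor
      · rw [ofFn_two]
        simp only [Fin.cons_zero]
        rw [show ((1 : Fin (n+2))) = (0 : Fin (n+1)).succ from (Fin.succ_zero_eq_one).symm]
        rw [Fin.cons_succ, Fin.cons_zero]
        have : (fun i : Fin n => (Fin.cons p.1 (Fin.cons (p.1 + 1) p.2) : Fin (n+2) → Fin 2) i.succ.succ)
            = p.2 := by
          funext i; rw [Fin.cons_succ, Fin.cons_succ]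
        rw [this, blocks_cons_cons_ne _ _ (Ne.symm (fin2_succ_ne p.1))]
        omega
      · rw [show ((1 : Fin (n+2))) = (0 : Fin (n+1)).succ from (Fin.succ_zero_eq_one).symm]
        rw [Fin.cons_succ, Fin.cons_zero, Fin.cons_zero]
        exact fin2_succ_ne p.1
    · intro S hS
      simp only [mem_filter, mem_univ, true_and] at hS
      have h10 : S 1 = S 0 + 1 := fin2_flip (S 0) (S 1) hS.2
      funext j
      refine Fin.cases ?_ (fun i => Fin.cases ?_ (fun i' => ?_) i) j
      · rw [Fin.cons_zero]
      · rw [Fin.cons_succ, Fin.cons_zero, Fin.succ_zero_eq_one, h10]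
      · rw [Fin.cons_succ, Fin.cons_succ]
    · intro p hp
      have h2 : (fun i : Fin n => (Fin.cons p.1 (Fin.cons (p.1 + 1) p.2) : Fin (n+2) → Fin 2) i.succ.succ)
          = p.2 := by
        funext i; rw [Fin.cons_succ, Fin.cons_succ]
      simp [h2]


def cnt : ℕ → ℕ → ℕ
  | n, 0 => 2 ^ n
  | 0, _+1 => 0
  | 1, _+1 => 0
  | (n+2), (k+1) => cnt (n+1) (k+1) + 2 * cnt n k

lemma cnt_zero (n : ℕ) : cnt n 0 = 2 ^ n := by
  match n with
  | 0 => rfl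
  | 1 => rfl
  | n+2 => rfl

lemma cnt_lt (n k : ℕ) (h : n < 2 * k) : cnt n k = 0 := by
  induction n using Nat.strong_induction_on generalizing k with
  | _ n ih =>
    match n, k with
    | 0, k+1 => rfl
    | 1, k+1 => rfl
    | n+2, k+1 =>
      show cnt (n+1) (k+1) + 2 * cnt n k = 0
      rw [ih (n+1) (by omega) (k+1) (by omega), ih n (by omega) k (by omega)]

lemma cnt_base (k : ℕ) : cnt (2*k+2) (k+1) = 2 ^ (k+1) := by
  induction k with
  | zero => rfl
  | succ k ih =>
    show cnt (2*(k+1)+1+1) (k+1+1) = 2 ^ (k+2)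
    have h1 : 2*(k+1)+1+1 = (2*k+2)+2 := by ring
    rw [h1]
    show cnt (2*k+2+1) (k+2) + 2 * cnt (2*k+2) (k+1) = 2 ^ (k+2)
    rw [cnt_lt (2*k+2+1) (k+2) (by omega), ih]
    ring

noncomputable def Ssum (k m : ℕ) : ℕ := ∑ j ∈ Finset.range (m+1), (k+j).choose k * 2^(m-j)

lemma Ssum_zero (k : ℕ) : Ssum k 0 = 1 := by simp [Ssum]

lemma Ssum_rec (k m : ℕ) : Ssum (k+1) (m+1) = Ssum (k+1) m + Ssum k (m+1) := by
  unfold Ssum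
  have pascal : ∀ j, (k+1+j).choose (k+1) = (k+j).choose k + (k+j).choose (k+1) := by
    intro j
    have : k+1+j = (k+j)+1 := by ring
    rw [this, Nat.choose_succ_succ']
  calc ∑ j ∈ range (m+1+1), (k+1+j).choose (k+1) * 2^(m+1-j)
      = ∑ j ∈ range (m+1+1), ((k+j).choose (k+1) * 2^(m+1-j) + (k+j).choose k * 2^(m+1-j)) := by
        apply Finset.sum_congr rfl
        intro j _
        rw [pascal j, Nat.add_mul, Nat.add_comm]
    _ = (∑ j ∈ range (m+1+1), (k+j).choose (k+1) * 2^(m+1-j))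
        + ∑ j ∈ range (m+1+1), (k+j).choose k * 2^(m+1-j) := Finset.sum_add_distrib
    _ = Ssum (k+1) m + ∑ j ∈ range (m+1+1), (k+j).choose k * 2^(m+1-j) := by
        congr 1
        rw [Finset.sum_range_succ']
        simp only [Nat.choose_succ_self, zero_mul, add_zero]
        unfold Ssum
        apply Finset.sum_congr rfl
        intro j hj
        rw [Finset.mem_range] at hj
        have h1 : k+(j+1) = k+1+j := by ring
        have h2 : m+1-(j+1) = m-j := by omega
        rw [h1, h2]
    _ = Ssum (k+1) m + Ssum k (m+1) := rfl

lemma Ssum_zero_left (m : ℕ) : Ssum 0 (m+1) = Ssum 0 m + 2^(m+1) := by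
  unfold Ssum
  rw [Finset.sum_range_succ']
  congr 1
  · apply Finset.sum_congr rfl
    intro j _
    simp only [Nat.choose_zero_right, one_mul]
    congr 1
    omega
  · simp

lemma Ssum_top (m : ℕ) : Ssum m (m+1) = 2 * Ssum m m + (2*m+1).choose m := by
  unfold Ssum
  rw [Finset.sum_range_succ]
  congr 1
  · rw [Finset.mul_sum]
    apply Finset.sum_congr rfl
    intro j hj
    rw [Finset.mem_range] at hj
    have h2 : m+1-j = (m-j)+1 := by omega
    rw [h2, pow_succ]
    ring
  · have : m + (m+1) = 2*m+1 := by ring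
    rw [this]
    simp

lemma Ssum_peel (m : ℕ) : Ssum (m+1) (m+1) = 2 * Ssum (m+1) m + (2*m+2).choose (m+1) := by
  unfold Ssum
  rw [Finset.sum_range_succ]
  congr 1
  · rw [Finset.mul_sum]
    apply Finset.sum_congr rfl
    intro j hj
    rw [Finset.mem_range] at hj
    have h2 : m+1-j = (m-j)+1 := by omega
    rw [h2, pow_succ]
    ring
  · have : m + 1 + (m+1) = 2*m+2 := by ring
    rw [this]
    simp

lemma central (m : ℕ) : (2*m+2).choose (m+1) = 2 * (2*m+1).choose m := by
  have h1 : (2*m+2) = (2*m+1) + 1 := by ring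
  rw [h1, Nat.choose_succ_succ]
  simp only [Nat.succ_eq_add_one]
  have h2 : (2*m+1).choose (m+1) = (2*m+1).choose m := by
    rw [show m+1 = 2*m+1 - m from by omega, Nat.choose_symm (by omega)]
  omega

lemma Ssum_diag (m : ℕ) : Ssum m m = 4 ^ m := by
  induction m with
  | zero => simp [Ssum]
  | succ m ih =>
    have e1 := Ssum_peel m
    have e2 := Ssum_rec m m
    have e3 := Ssum_top m
    have e4 := central m
    have : Ssum (m+1) (m+1) = 4 * Ssum m m := by omega
    rw [this, ih]
    ring

lemma cnt_formula : ∀ k m, cnt (2*(k+1)+m) (k+1) = 2^(k+1) * Ssum k m := by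
  intro k
  induction k with
  | zero =>
    intro m
    induction m with
    | zero => rw [Ssum_zero]; rfl
    | succ m ihm =>
      have h1 : 2*(0+1)+(m+1) = (m+1)+2 := by ring
      rw [h1]
      show cnt (m+2) 1 + 2 * cnt (m+1) 0 = 2^1 * Ssum 0 (m+1)
      have h2 : (m+2) = 2*(0+1)+m := by ring
      rw [h2, ihm, cnt_zero, Ssum_zero_left]
      ring
  | succ k ihk =>
    intro m
    induction m with
    | zero =>
      have h1 : 2*(k+1+1)+0 = 2*(k+1)+2 := by ring
      rw [h1, cnt_base, Ssum_zero]
      ring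
    | succ m ihm =>
      have h1 : 2*(k+1+1)+(m+1) = (2*k+m+3)+2 := by ring
      rw [h1]
      show cnt (2*k+m+3+1) (k+2) + 2 * cnt (2*k+m+3) (k+1) = 2^(k+2) * Ssum (k+1) (m+1)
      have h2 : 2*k+m+3+1 = 2*(k+1+1)+m := by ring
      have h3 : 2*k+m+3 = 2*(k+1)+(m+1) := by ring
      rw [h2, ihm, h3, ihk (m+1), Ssum_rec]
      ring

lemma cnt_final (k : ℕ) (hk : 1 ≤ k) : cnt (3*k-1) k = 2^(3*k-2) := by
  obtain ⟨k', rfl⟩ : ∃ k', k = k' + 1 := ⟨k - 1, by omega⟩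
  have h1 : 3*(k'+1)-1 = 2*(k'+1)+k' := by omega
  rw [h1, cnt_formula, Ssum_diag]
  have h2 : 3*(k'+1)-2 = 3*k'+1 := by omega
  rw [h2]
  have : (4:ℕ)^k' = 2^(2*k') := by
    rw [show (4:ℕ) = 2^2 from rfl, ← pow_mul]
  rw [this, ← pow_add]
  congr 1
  omega

lemma card_eq_cnt : ∀ n k : ℕ,
    (univ.filter (fun S : Fin n → Fin 2 => k ≤ blocks (List.ofFn S))).card = cnt n k := by
  intro n
  induction n using Nat.strong_induction_on with
  | _ n ih =>
    match n with
    | 0 =>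
      intro k
      match k with
      | 0 =>
        rw [cnt_zero, Finset.filter_true_of_mem (fun _ _ => Nat.zero_le _)]
        simp
      | k+1 =>
        rw [show cnt 0 (k+1) = 0 from rfl, Finset.card_eq_zero, Finset.filter_eq_empty_iff]
        intro S _
        simp [blocks]
    | 1 =>
      intro k
      match k with
      | 0 =>
        rw [cnt_zero, Finset.filter_true_of_mem (fun _ _ => Nat.zero_le _)]
        simp
      | k+1 =>
        rw [show cnt 1 (k+1) = 0 from rfl, Finset.card_eq_zero, Finset.filter_eq_empty_iff]
        intro S _
        have : List.ofFn S = [S 0] := by simp [List.ofFn_succ]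
        rw [this]
        simp [blocks]
    | n+2 =>
      intro k
      match k with
      | 0 =>
        rw [cnt_zero, Finset.filter_true_of_mem (fun _ _ => Nat.zero_le _)]
        simp
      | k+1 =>
        rw [card_step, ih (n+1) (by omega) (k+1), ih n (by omega) k]
        rfl

/-- Exactly half of all binary strings of length `3k-1` are `k`-omni. -/
theorem stmt_7 (k : ℕ) (hk : 1 ≤ k) :
    ((Finset.univ.filter (fun S : Fin (3 * k - 1) → Fin 2 =>
        ∀ T : List (Fin 2), T.length = k → T.Sublist (List.ofFn S))).card : ℝ)
        / 2 ^ (3 * k - 1)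
      = 1 / 2 := by
  have hfilter : (Finset.univ.filter (fun S : Fin (3 * k - 1) → Fin 2 =>
        ∀ T : List (Fin 2), T.length = k → T.Sublist (List.ofFn S)))
      = (Finset.univ.filter (fun S : Fin (3 * k - 1) → Fin 2 => k ≤ blocks (List.ofFn S))) := by
    apply Finset.filter_congr
    intro S _
    exact omni_iff_blocks (List.ofFn S) k
  rw [hfilter, card_eq_cnt, cnt_final k hk]
  have h1 : 3 * k - 1 = (3 * k - 2) + 1 := by omega
  rw [h1, pow_succ]
  push_cast
  rw [mul_comm, ← div_div, div_self (by positivity : (2:ℝ) ^ (k * 3 - 2) ≠ 0)]
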